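/- In the standing setup (canonical partial order ≼, maximal chain P, holes, pair admissibility and the standing assumption), let x,y ∈ X° be distinct and suppose it is NOT the case that i(x)=i(y), j(x)=j(y), and either d(x,y) > max{d_x,d_y} + 3ε or d(x,y) < max{d_x,d_y} − 3ε. Then for every bounding hole H_k of x (k ∈ {i(x), j(x)−1}) and every bounding hole H_{k'} of y (k' ∈ {i(y), j(y)−1}), the pair (H_k, H_{k'}) is (x,y,12)-admissible. -/

import Mathlib

open Finset

variable {X : Type*}

/-- A dissimilarity on `X`: symmetric, nonnegative, zero on the diagonal. -/
def IsDissimilarity (d : X → X → ℝ) : Prop :=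
  (∀ x y, d x y = d y x) ∧ (∀ x y, 0 ≤ d x y) ∧ (∀ x, d x x = 0)

/-- Here `le` stands for the reflexive closure `⪯` of a linear order `≺` on `X`.
`EpsCompatible d le ε` says that the order is `ε`-compatible with `d`, i.e.
`d u v ≤ d x y + 2ε` whenever `x ⪯ u ⪯ v ⪯ y`. -/
def EpsCompatible (d : X → X → ℝ) (le : X → X → Prop) (ε : ℝ) : Prop :=
  ∀ x u v y, le x u → le u v → le v y → d u v ≤ d x y + 2 * ε

/-- The `l∞`-distance `‖d - d'‖∞ = max_{x,y} |d x y - d' x y|`. -/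
noncomputable def linfDist [Fintype X] [Nonempty X] (d d' : X → X → ℝ) : ℝ :=
  (Finset.univ : Finset (X × X)).sup' Finset.univ_nonempty
    fun p => |d p.1 p.2 - d' p.1 p.2|

/-- A dissimilarity is Robinsonian if it admits a compatible linear order. -/
def IsRobinsonian (d : X → X → ℝ) : Prop :=
  ∃ le : X → X → Prop, IsLinearOrder X le ∧ EpsCompatible d le 0

/-- The canonical relation `≼` determined by `d`, `ε` and the base pair `(p, q)`:
the smallest reflexive and transitive relation containing `(p, q)` and closed under the
betweenness rules coming from triplets `x, z, y` with `d x y > max (d x z) (d z y) + 2ε`. -/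
inductive Canon (d : X → X → ℝ) (ε : ℝ) (p q : X) : X → X → Prop
  | base : Canon d ε p q p q
  | refl (x : X) : Canon d ε p q x x
  | trans {x y z : X} : Canon d ε p q x y → Canon d ε p q y z → Canon d ε p q x z
  | rule1 {x y z : X} (h : d x y > max (d x z) (d z y) + 2 * ε)
      (hxz : Canon d ε p q x z) : Canon d ε p q z y
  | rule2 {x y z : X} (h : d x y > max (d x z) (d z y) + 2 * ε)
      (hzy : Canon d ε p q z y) : Canon d ε p q x z
  | rule3a {x y z : X} (h : d x y > max (d x z) (d z y) + 2 * ε)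
      (hxy : Canon d ε p q x y) : Canon d ε p q x z
  | rule3b {x y z : X} (h : d x y > max (d x z) (d z y) + 2 * ε)
      (hxy : Canon d ε p q x y) : Canon d ε p q z y
  | rule4 {x y z : X} (h : d x y > max (d x z) (d z y) + 2 * ε)
      (hzx : Canon d ε p q z x) : Canon d ε p q y z
  | rule5 {x y z : X} (h : d x y > max (d x z) (d z y) + 2 * ε)
      (hyz : Canon d ε p q y z) : Canon d ε p q z x
  | rule6a {x y z : X} (h : d x y > max (d x z) (d z y) + 2 * ε)
      (hyx : Canon d ε p q y x) : Canon d ε p q y z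
  | rule6b {x y z : X} (h : d x y > max (d x z) (d z y) + 2 * ε)
      (hyx : Canon d ε p q y x) : Canon d ε p q z x

/-- `x ? y` : `x` and `y` are incomparable for the canonical relation. -/
def CanonIncomp (d : X → X → ℝ) (ε : ℝ) (p q x y : X) : Prop :=
  ¬ Canon d ε p q x y ∧ ¬ Canon d ε p q y x

/-- `x ∈ X° = X \ P`, where `P = {a 0, …, a (n-1)}`. -/
def OutsideChain (a : ℕ → X) (n : ℕ) (x : X) : Prop := ∀ i, i < n → a i ≠ x

/-- The standing setup: `d` is a dissimilarity, `ε ≥ 0`, the canonical relation `≼`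
determined by `d`, `ε` and the distinct base pair `(p₀, q₀)` is antisymmetric (a partial
order), `a 0 ≼ a 1 ≼ … ≼ a (n-1)` is a maximal (by inclusion) chain of `(X, ≼)`, and
`a 0 ≼ x ≼ a (n-1)` for every `x ∈ X`. -/
structure RobinsonSetup (d : X → X → ℝ) (ε : ℝ) (p₀ q₀ : X) (a : ℕ → X) (n : ℕ) : Prop where
  dissim : IsDissimilarity d
  eps_nonneg : 0 ≤ ε
  base_ne : p₀ ≠ q₀
  antisymm : ∀ x y, Canon d ε p₀ q₀ x y → Canon d ε p₀ q₀ y x → x = y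
  npos : 0 < n
  chain : ∀ i j, i < j → j < n → Canon d ε p₀ q₀ (a i) (a j) ∧ a i ≠ a j
  maximal : ∀ x, OutsideChain a n x →
      ∃ i, i < n ∧ ¬ Canon d ε p₀ q₀ (a i) x ∧ ¬ Canon d ε p₀ q₀ x (a i)
  lower : ∀ x, Canon d ε p₀ q₀ (a 0) x
  upper : ∀ x, Canon d ε p₀ q₀ x (a (n - 1))

/-- `i(x)`: the largest index `i < n` with `a i ≼ x`. -/
noncomputable def iIdx (d : X → X → ℝ) (ε : ℝ) (p₀ q₀ : X) (a : ℕ → X) (n : ℕ) (x : X) : ℕ :=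
  sSup {i | i < n ∧ Canon d ε p₀ q₀ (a i) x}

/-- `j(x)`: the smallest index `j < n` with `x ≼ a j`. -/
noncomputable def jIdx (d : X → X → ℝ) (ε : ℝ) (p₀ q₀ : X) (a : ℕ → X) (n : ℕ) (x : X) : ℕ :=
  sInf {j | j < n ∧ Canon d ε p₀ q₀ x (a j)}

/-- `ε`-compatibility of the linear order given by the first `m` entries of the
sequence `b` (with the relevant dissimilarity restricted to those entries). -/
def SeqCompatible (d : X → X → ℝ) (b : ℕ → X) (m : ℕ) (ε : ℝ) : Prop :=
  ∀ q r s t : ℕ, q ≤ r → r ≤ s → s ≤ t → t < m → d (b r) (b s) ≤ d (b q) (b t) + 2 * ε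

/-- The sequence on `P ∪ {x}` obtained by inserting `x` into the hole `H k`,
i.e. between `a k` and `a (k+1)`. -/
def insertSeq (a : ℕ → X) (x : X) (k : ℕ) : ℕ → X := fun m =>
  if m ≤ k then a m else if m = k + 1 then x else a (m - 1)

/-- The sequence on `P ∪ {x, y}` obtained by inserting `x` into the hole `H k` and `y`
into the hole `H k'`, where `k ≤ k'` (and `x` placed before `y` if `k = k'`). -/
def insertSeq2 (a : ℕ → X) (x y : X) (k k' : ℕ) : ℕ → X := fun m =>
  if m ≤ k then a m
  else if m = k + 1 then x
  else if m ≤ k' + 1 then a (m - 1)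
  else if m = k' + 2 then y
  else a (m - 2)

/-- The hole `H k` is `x`-admissible: the linear order on `P ∪ {x}` obtained by inserting
`x` between `a k` and `a (k+1)` is `ε`-compatible with (the restriction of) `d`. -/
def HoleAdmissible (d : X → X → ℝ) (ε : ℝ) (a : ℕ → X) (n : ℕ) (x : X) (k : ℕ) : Prop :=
  SeqCompatible d (insertSeq a x k) (n + 1) ε

/-- The pair of holes `(H k, H k')` is `(x, y, c)`-admissible. -/
def PairHoleAdmissible (d : X → X → ℝ) (ε : ℝ) (a : ℕ → X) (n : ℕ)
    (x y : X) (k k' : ℕ) (c : ℝ) : Prop :=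
  HoleAdmissible d ε a n x k ∧ HoleAdmissible d ε a n y k' ∧
    ((k ≤ k' ∧ SeqCompatible d (insertSeq2 a x y k k') (n + 2) (c * ε)) ∨
     (k' ≤ k ∧ SeqCompatible d (insertSeq2 a y x k' k) (n + 2) (c * ε)))

/-- `d_x`: the mean of `min {d x (a k) : i < k < j}` and `max {d x (a k) : i < k < j}`. -/
noncomputable def dxVal (d : X → X → ℝ) (a : ℕ → X) (x : X) (i j : ℕ) : ℝ :=
  (sInf {r | ∃ k, i < k ∧ k < j ∧ r = d x (a k)} +
    sSup {r | ∃ k, i < k ∧ k < j ∧ r = d x (a k)}) / 2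

/-- Standing assumption: for all distinct `z, w ∈ X°` and each bounding hole `H k` of `z`
there is a `w`-admissible hole `H k'` such that `(H k, H k')` is `(z, w, 1)`-admissible. -/
def StandingAssumption (d : X → X → ℝ) (ε : ℝ) (p₀ q₀ : X) (a : ℕ → X) (n : ℕ) : Prop :=
  ∀ z w, z ≠ w → OutsideChain a n z → OutsideChain a n w →
    ∀ k, (k = iIdx d ε p₀ q₀ a n z ∨ k = jIdx d ε p₀ q₀ a n z - 1) →
      ∃ k', iIdx d ε p₀ q₀ a n w ≤ k' ∧ k' ≤ jIdx d ε p₀ q₀ a n w - 1 ∧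
        PairHoleAdmissible d ε a n z w k k' 1

/-- `x ∈ X_ij`. -/
def InXij (d : X → X → ℝ) (ε : ℝ) (p₀ q₀ : X) (a : ℕ → X) (n i j : ℕ) (x : X) : Prop :=
  OutsideChain a n x ∧ iIdx d ε p₀ q₀ a n x = i ∧ jIdx d ε p₀ q₀ a n x = j

/-- `{x, y} ∈ L_ij` : `d x y < max (d_x) (d_y) - 3ε`. -/
def LPair (d : X → X → ℝ) (ε : ℝ) (a : ℕ → X) (i j : ℕ) (x y : X) : Prop :=
  d x y < max (dxVal d a x i j) (dxVal d a y i j) - 3 * ε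

/-- `x` and `y` lie in a common block: same connected component of the graph `(X_ij, L_ij)`. -/
def SameBlock (d : X → X → ℝ) (ε : ℝ) (p₀ q₀ : X) (a : ℕ → X) (n i j : ℕ) (x y : X) : Prop :=
  Relation.ReflTransGen
    (fun u v => InXij d ε p₀ q₀ a n i j u ∧ InXij d ε p₀ q₀ a n i j v ∧ LPair d ε a i j u v)
    x y

/-- `x ↣ y` : rule (A1) or (A2). -/
def ArrowRel (d : X → X → ℝ) (ε : ℝ) (p₀ q₀ : X) (a : ℕ → X) (n i j : ℕ) (x y : X) : Prop :=
  dxVal d a x i j < dxVal d a y i j - 4 * ε ∨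
    (dxVal d a y i j - 4 * ε ≤ dxVal d a x i j ∧
      ∃ z, InXij d ε p₀ q₀ a n i j z ∧ ¬ LPair d ε a i j x z ∧ ¬ LPair d ε a i j y z ∧
        d x z < d y z - 16 * ε)

/-- The arc `x → y` of the directed graph `L→_ij` : rule (L1) or (L2). -/
def LArc (d : X → X → ℝ) (ε : ℝ) (p₀ q₀ : X) (a : ℕ → X) (n i j : ℕ) (x y : X) : Prop :=
  InXij d ε p₀ q₀ a n i j x ∧ InXij d ε p₀ q₀ a n i j y ∧
    ((ArrowRel d ε p₀ q₀ a n i j x y ∧ SameBlock d ε p₀ q₀ a n i j x y) ∨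
      d x y < max (dxVal d a x i j) (dxVal d a y i j) - 5 * ε)

/-- `x` and `y` lie in a common cell: same strongly connected component of `L→_ij`. -/
def SameCell (d : X → X → ℝ) (ε : ℝ) (p₀ q₀ : X) (a : ℕ → X) (n i j : ℕ) (x y : X) : Prop :=
  Relation.ReflTransGen (LArc d ε p₀ q₀ a n i j) x y ∧
    Relation.ReflTransGen (LArc d ε p₀ q₀ a n i j) y x

section Helpers
variable {X : Type*} {d : X → X → ℝ} {ε : ℝ} {p₀ q₀ : X} {a : ℕ → X} {n : ℕ}

lemma seq_mono {b : ℕ → X} {m : ℕ} {ε₁ ε₂ : ℝ} (h : SeqCompatible d b m ε₁)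
    (hle : ε₁ ≤ ε₂) : SeqCompatible d b m ε₂ := by
  intro q r s t h1 h2 h3 h4
  have := h q r s t h1 h2 h3 h4
  linarith

lemma ex0 {b : ℕ → X} {mm : ℕ} {ε' : ℝ} (C : SeqCompatible d b mm ε')
    {q r s t : ℕ} {e1 e2 e3 e4 : X} (h1 : b q = e1) (h2 : b r = e2) (h3 : b s = e3)
    (h4 : b t = e4) (hqr : q ≤ r) (hrs : r ≤ s) (hst : s ≤ t) (ht : t < mm) :
    d e2 e3 ≤ d e1 e4 + 2 * ε' := by
  subst h1; subst h2; subst h3; subst h4; exact C q r s t hqr hrs hst ht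

lemma iL1 {x : X} {k m : ℕ} (h : m ≤ k) : insertSeq a x k m = a m := by
  unfold insertSeq; simp [h]

lemma iL2 {x : X} {k m : ℕ} (h : k < m) : insertSeq a x k (m + 1) = a m := by
  unfold insertSeq
  have h1 : ¬ (m + 1 ≤ k) := by omega
  have h2 : m + 1 ≠ k + 1 := by omega
  simp [h1, h2, show m ≠ k by omega]

lemma iL3 {x : X} {k : ℕ} : insertSeq a x k (k + 1) = x := by
  unfold insertSeq; simp

lemma iM1 {u v : X} {h h' m : ℕ} (hm : m ≤ h) : insertSeq2 a u v h h' m = a m := by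
  unfold insertSeq2; simp [hm]

lemma iM2 {u v : X} {h h' m : ℕ} (hm : h < m) (hm' : m ≤ h') :
    insertSeq2 a u v h h' (m + 1) = a m := by
  unfold insertSeq2
  have h1 : ¬ (m + 1 ≤ h) := by omega
  have h2 : m + 1 ≠ h + 1 := by omega
  have h3 : m + 1 ≤ h' + 1 := by omega
  simp [h1, h2, h3, show m ≠ h by omega]

lemma iM3 {u v : X} {h h' m : ℕ} (hh : h ≤ h') (hm : h' < m) :
    insertSeq2 a u v h h' (m + 2) = a m := by
  unfold insertSeq2
  have h1 : ¬ (m + 2 ≤ h) := by omega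
  have h2 : m + 2 ≠ h + 1 := by omega
  have h3 : ¬ (m + 2 ≤ h' + 1) := by omega
  have h4 : m + 2 ≠ h' + 2 := by omega
  simp [h1, h2, h3, h4, show m ≠ h' by omega]

lemma iM4 {u v : X} {h h' : ℕ} : insertSeq2 a u v h h' (h + 1) = u := by
  unfold insertSeq2; simp

lemma iM5 {u v : X} {h h' : ℕ} (hh : h ≤ h') : insertSeq2 a u v h h' (h' + 2) = v := by
  unfold insertSeq2
  have h1 : ¬ (h' + 2 ≤ h) := by omega
  have h2 : h' + 2 ≠ h + 1 := by omega
  have h3 : ¬ (h' + 2 ≤ h' + 1) := by omega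
  simp [h1, h2, h3]

lemma fne1 {u v z : X} (hp : Canon d ε p₀ q₀ u z) (hb : ¬ Canon d ε p₀ q₀ z v) :
    d u v ≤ max (d u z) (d z v) + 2 * ε := by
  by_contra h; push_neg at h; exact hb (Canon.rule1 h hp)

lemma fne2 {u v z : X} (hp : Canon d ε p₀ q₀ z v) (hb : ¬ Canon d ε p₀ q₀ u z) :
    d u v ≤ max (d u z) (d z v) + 2 * ε := by
  by_contra h; push_neg at h; exact hb (Canon.rule2 h hp)

lemma fne3a {u v z : X} (hp : Canon d ε p₀ q₀ u v) (hb : ¬ Canon d ε p₀ q₀ u z) :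
    d u v ≤ max (d u z) (d z v) + 2 * ε := by
  by_contra h; push_neg at h; exact hb (Canon.rule3a h hp)

lemma fne3b {u v z : X} (hp : Canon d ε p₀ q₀ u v) (hb : ¬ Canon d ε p₀ q₀ z v) :
    d u v ≤ max (d u z) (d z v) + 2 * ε := by
  by_contra h; push_neg at h; exact hb (Canon.rule3b h hp)

end Helpers
section Assemble
variable {X : Type*} {d : X → X → ℝ} {ε : ℝ} {a : ℕ → X} {n : ℕ}

/-- position of chain index `m` in `insertSeq _ _ k`. -/
def ps1 (k m : ℕ) : ℕ := if m ≤ k then m else m + 1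

/-- position of chain index `m` in `insertSeq2 _ _ _ k k'`. -/
def ps2 (k k' m : ℕ) : ℕ := if m ≤ k then m else if m ≤ k' then m + 1 else m + 2

lemma iP1 {x : X} {k m : ℕ} : insertSeq a x k (ps1 k m) = a m := by
  unfold ps1; split
  · exact iL1 ‹_›
  · exact iL2 (by omega)

lemma iP2 {u v : X} {k k' m : ℕ} (hkk : k ≤ k') :
    insertSeq2 a u v k k' (ps2 k k' m) = a m := by
  unfold ps2; split
  · exact iM1 ‹_›
  · split
    · exact iM2 (by omega) ‹_›
    · exact iM3 hkk (by omega)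

lemma ps1_mono {k m m' : ℕ} (h : m ≤ m') : ps1 k m ≤ ps1 k m' := by
  unfold ps1; split <;> split <;> omega

lemma ps1_lt {k m n : ℕ} (h : m < n) : ps1 k m < n + 1 := by
  unfold ps1; split <;> omega

lemma ps1_xle {k m : ℕ} (h : k < m) : k + 1 ≤ ps1 k m := by
  unfold ps1; split <;> omega

lemma ps1_lex {k m : ℕ} (h : m ≤ k) : ps1 k m ≤ k + 1 := by
  unfold ps1; split <;> omega

lemma ps2_le {k k' m m' : ℕ} (h : ps2 k k' m ≤ ps2 k k' m') : m ≤ m' := by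
  unfold ps2 at h; split_ifs at h <;> omega

lemma ps2_ltx {k k' m : ℕ} (h : ps2 k k' m < k + 1) : m ≤ k := by
  unfold ps2 at h; split_ifs at h <;> omega

lemma ps2_gtx {k k' m : ℕ} (h : k + 1 < ps2 k k' m) : k < m := by
  unfold ps2 at h; split_ifs at h <;> omega

lemma ps2_lty {k k' m : ℕ} (hkk : k ≤ k') (h : ps2 k k' m < k' + 2) : m ≤ k' := by
  unfold ps2 at h; split_ifs at h <;> omega

lemma ps2_gty {k k' m : ℕ} (hkk : k ≤ k') (h : k' + 2 < ps2 k k' m) : k' < m := by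
  unfold ps2 at h; split_ifs at h <;> omega

lemma ps2_ltn {k k' m n : ℕ} (h : m < n) : ps2 k k' m < n + 2 := by
  unfold ps2; split_ifs <;> omega

lemma inv2 {k k' : ℕ} (hkk : k ≤ k') (hn : k' + 2 ≤ n) {p : ℕ}
    (hp : p < n + 2) : (∃ m, m < n ∧ p = ps2 k k' m) ∨ p = k + 1 ∨ p = k' + 2 := by
  by_cases h1 : p ≤ k
  · refine Or.inl ⟨p, by omega, ?_⟩
    unfold ps2; simp [h1]
  by_cases h2 : p = k + 1
  · exact Or.inr (Or.inl h2)
  by_cases h3 : p ≤ k' + 1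
  · refine Or.inl ⟨p - 1, by omega, ?_⟩
    have e1 : ¬ (p - 1 ≤ k) := by omega
    have e2 : p - 1 ≤ k' := by omega
    unfold ps2; simp [e1, e2]; omega
  by_cases h5 : p = k' + 2
  · exact Or.inr (Or.inr h5)
  · refine Or.inl ⟨p - 2, by omega, ?_⟩
    have e1 : ¬ (p - 2 ≤ k) := by omega
    have e2 : ¬ (p - 2 ≤ k') := by omega
    unfold ps2; simp [e1, e2]; omega

lemma assemble {x y : X} {k k' : ℕ}
    (dself : ∀ u : X, d u u = 0) (dnn : ∀ u v : X, 0 ≤ d u v)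
    (heps : 0 ≤ ε) (hkk : k ≤ k') (hn : k' + 2 ≤ n)
    (Hx : HoleAdmissible d ε a n x k) (Hy : HoleAdmissible d ε a n y k')
    (hK1 : ∀ α, α ≤ k → d x y ≤ d (a α) y + 12 * ε)
    (hK2 : ∀ γ, k' < γ → γ < n → d x y ≤ d x (a γ) + 12 * ε)
    (hK3 : ∀ β, k < β → β ≤ k' → d x (a β) ≤ d x y + 12 * ε)
    (hK4 : ∀ β, k < β → β ≤ k' → d (a β) y ≤ d x y + 12 * ε)
    (hK5 : ∀ α, α ≤ k → d (a α) x ≤ d (a α) y + 12 * ε)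
    (hK6 : ∀ γ, k' < γ → γ < n → d y (a γ) ≤ d x (a γ) + 12 * ε) :
    SeqCompatible d (insertSeq2 a x y k k') (n + 2) (12 * ε) := by
  have hev : ∀ m, insertSeq2 a x y k k' (ps2 k k' m) = a m := fun m => iP2 hkk
  have hevx : insertSeq2 a x y k k' (k + 1) = x := iM4
  have hevy : insertSeq2 a x y k k' (k' + 2) = y := iM5 hkk
  have hkn : k < n := by omega
  have hk'n : k' < n := by omega
  have step1 : ∀ q r s, q ≤ r → r ≤ s → s < n + 2 →
      d (insertSeq2 a x y k k' r) (insertSeq2 a x y k k' s) ≤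
      d (insertSeq2 a x y k k' q) (insertSeq2 a x y k k' s) + 12 * ε := by
    intro q r s hqr hrs hsn
    rcases eq_or_lt_of_le hqr with h | hqr
    · subst h; linarith
    rcases eq_or_lt_of_le hrs with h | hrs
    · subst h
      rw [dself]
      have := dnn (insertSeq2 a x y k k' q) (insertSeq2 a x y k k' r)
      linarith
    rcases inv2 hkk hn hsn with ⟨ms, hms, rfl⟩ | rfl | rfl
    · -- s chain
      rcases inv2 hkk hn (show r < n + 2 by omega) with ⟨mr, hmr, rfl⟩ | rfl | rfl
      · -- r chain
        rcases inv2 hkk hn (show q < n + 2 by omega) with ⟨mq, hmq, rfl⟩ | rfl | rfl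
        · -- q chain : all chain, via Hx
          rw [hev, hev, hev]
          have h1 : mq ≤ mr := ps2_le (le_of_lt hqr)
          have h2 : mr ≤ ms := ps2_le (le_of_lt hrs)
          have := ex0 Hx (iP1 (m := mq)) (iP1 (m := mr)) (iP1 (m := ms)) (iP1 (m := ms))
            (ps1_mono h1) (ps1_mono h2) le_rfl (ps1_lt hms)
          linarith
        · -- q = x
          rw [hev, hev, hevx]
          have h1 : k < mr := ps2_gtx hqr
          have h2 : mr ≤ ms := ps2_le (le_of_lt hrs)
          have := ex0 Hx (iL3 (x := x)) (iP1 (m := mr)) (iP1 (m := ms)) (iP1 (m := ms))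
            (ps1_xle h1) (ps1_mono h2) le_rfl (ps1_lt hms)
          linarith
        · -- q = y
          rw [hev, hev, hevy]
          have h1 : k' < mr := ps2_gty hkk hqr
          have h2 : mr ≤ ms := ps2_le (le_of_lt hrs)
          have := ex0 Hy (iL3 (x := y)) (iL2 (m := mr) (by omega)) (iL2 (m := ms) (by omega))
            (iL2 (m := ms) (by omega)) (by omega) (by omega) le_rfl (by omega)
          linarith
      · -- r = x, s chain
        rcases inv2 hkk hn (show q < n + 2 by omega) with ⟨mq, hmq, rfl⟩ | rfl | rfl
        · rw [hev, hevx, hev]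
          have h1 : mq ≤ k := ps2_ltx hqr
          have h2 : k < ms := ps2_gtx hrs
          have := ex0 Hx (iL1 (m := mq) h1) (iL3 (x := x)) (iP1 (m := ms)) (iP1 (m := ms))
            (by omega) (ps1_xle h2) le_rfl (ps1_lt hms)
          linarith
        · omega
        · omega
      · -- r = y, s chain
        rcases inv2 hkk hn (show q < n + 2 by omega) with ⟨mq, hmq, rfl⟩ | rfl | rfl
        · rw [hev, hevy, hev]
          have h1 : mq ≤ k' := ps2_lty hkk hqr
          have h2 : k' < ms := ps2_gty hkk hrs
          have := ex0 Hy (iL1 (m := mq) h1) (iL3 (x := y)) (iL2 (m := ms) (by omega))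
            (iL2 (m := ms) (by omega)) (by omega) (by omega) le_rfl (by omega)
          linarith
        · -- q = x, r = y, s chain : K6
          rw [hevx, hevy, hev]
          have h2 : k' < ms := ps2_gty hkk hrs
          exact hK6 ms h2 hms
        · omega
    · -- s = x
      rcases inv2 hkk hn (show r < n + 2 by omega) with ⟨mr, hmr, rfl⟩ | rfl | rfl
      · rcases inv2 hkk hn (show q < n + 2 by omega) with ⟨mq, hmq, rfl⟩ | rfl | rfl
        · rw [hev, hev, hevx]
          have h1 : mq ≤ mr := ps2_le (le_of_lt hqr)
          have h2 : mr ≤ k := ps2_ltx hrs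
          have := ex0 Hx (iL1 (m := mq) (by omega)) (iL1 (m := mr) h2) (iL3 (x := x))
            (iL3 (x := x)) (by omega) (by omega) le_rfl (by omega)
          linarith
        · omega
        · omega
      · omega
      · omega
    · -- s = y
      rcases inv2 hkk hn (show r < n + 2 by omega) with ⟨mr, hmr, rfl⟩ | rfl | rfl
      · rcases inv2 hkk hn (show q < n + 2 by omega) with ⟨mq, hmq, rfl⟩ | rfl | rfl
        · rw [hev, hev, hevy]
          have h1 : mq ≤ mr := ps2_le (le_of_lt hqr)
          have h2 : mr ≤ k' := ps2_lty hkk hrs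
          have := ex0 Hy (iL1 (m := mq) (by omega)) (iL1 (m := mr) h2) (iL3 (x := y))
            (iL3 (x := y)) (by omega) (by omega) le_rfl (by omega)
          linarith
        · -- q = x, r chain, s = y : K4
          rw [hevx, hev, hevy]
          have h1 : k < mr := ps2_gtx hqr
          have h2 : mr ≤ k' := ps2_lty hkk hrs
          exact hK4 mr h1 h2
        · omega
      · -- r = x, s = y
        rcases inv2 hkk hn (show q < n + 2 by omega) with ⟨mq, hmq, rfl⟩ | rfl | rfl
        · -- q chain : K1
          rw [hev, hevx, hevy]
          have h1 : mq ≤ k := ps2_ltx hqr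
          exact hK1 mq h1
        · omega
        · omega
      · omega
  have step2 : ∀ q s t, q ≤ s → s ≤ t → t < n + 2 →
      d (insertSeq2 a x y k k' q) (insertSeq2 a x y k k' s) ≤
      d (insertSeq2 a x y k k' q) (insertSeq2 a x y k k' t) + 12 * ε := by
    intro q s t hqs hst htn
    rcases eq_or_lt_of_le hqs with h | hqs
    · subst h
      rw [dself]
      have := dnn (insertSeq2 a x y k k' q) (insertSeq2 a x y k k' t)
      linarith
    rcases eq_or_lt_of_le hst with h | hst
    · subst h; linarith
    rcases inv2 hkk hn (show q < n + 2 by omega) with ⟨mq, hmq, rfl⟩ | rfl | rfl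
    · -- q chain
      rcases inv2 hkk hn (show s < n + 2 by omega) with ⟨ms, hms, rfl⟩ | rfl | rfl
      · rcases inv2 hkk hn htn with ⟨mt, hmt, rfl⟩ | rfl | rfl
        · rw [hev, hev, hev]
          have h1 : mq ≤ ms := ps2_le (le_of_lt hqs)
          have h2 : ms ≤ mt := ps2_le (le_of_lt hst)
          have := ex0 Hx (iP1 (m := mq)) (iP1 (m := mq)) (iP1 (m := ms)) (iP1 (m := mt))
            le_rfl (ps1_mono h1) (ps1_mono h2) (ps1_lt hmt)
          linarith
        · -- t = x
          rw [hev, hev, hevx]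
          have h1 : mq ≤ ms := ps2_le (le_of_lt hqs)
          have h2 : ms ≤ k := ps2_ltx hst
          have := ex0 Hx (iL1 (m := mq) (by omega)) (iL1 (m := mq) (by omega))
            (iL1 (m := ms) h2) (iL3 (x := x)) le_rfl (by omega) (by omega) (by omega)
          linarith
        · -- t = y
          rw [hev, hev, hevy]
          have h1 : mq ≤ ms := ps2_le (le_of_lt hqs)
          have h2 : ms ≤ k' := ps2_lty hkk hst
          have := ex0 Hy (iL1 (m := mq) (by omega)) (iL1 (m := mq) (by omega))
            (iL1 (m := ms) h2) (iL3 (x := y)) le_rfl (by omega) (by omega) (by omega)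
          linarith
      · -- s = x
        have h1 : mq ≤ k := ps2_ltx hqs
        rcases inv2 hkk hn htn with ⟨mt, hmt, rfl⟩ | rfl | rfl
        · rw [hev, hevx, hev]
          have h2 : k < mt := ps2_gtx hst
          have := ex0 Hx (iL1 (m := mq) h1) (iL1 (m := mq) h1) (iL3 (x := x))
            (iP1 (m := mt)) le_rfl (by omega) (ps1_xle h2) (ps1_lt hmt)
          linarith
        · omega
        · -- t = y : K5
          rw [hev, hevx, hevy]
          exact hK5 mq h1
      · -- s = y
        have h1 : mq ≤ k' := ps2_lty hkk hqs
        rcases inv2 hkk hn htn with ⟨mt, hmt, rfl⟩ | rfl | rfl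
        · rw [hev, hevy, hev]
          have h2 : k' < mt := ps2_gty hkk hst
          have := ex0 Hy (iL1 (m := mq) h1) (iL1 (m := mq) h1) (iL3 (x := y))
            (iL2 (m := mt) (by omega)) le_rfl (by omega) (by omega) (by omega)
          linarith
        · omega
        · omega
    · -- q = x
      rcases inv2 hkk hn (show s < n + 2 by omega) with ⟨ms, hms, rfl⟩ | rfl | rfl
      · have h1 : k < ms := ps2_gtx hqs
        rcases inv2 hkk hn htn with ⟨mt, hmt, rfl⟩ | rfl | rfl
        · rw [hevx, hev, hev]
          have h2 : ms ≤ mt := ps2_le (le_of_lt hst)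
          have := ex0 Hx (iL3 (x := x)) (iL3 (x := x)) (iP1 (m := ms)) (iP1 (m := mt))
            le_rfl (ps1_xle h1) (ps1_mono h2) (ps1_lt hmt)
          linarith
        · omega
        · -- t = y : K3
          rw [hevx, hev, hevy]
          have h2 : ms ≤ k' := ps2_lty hkk hst
          exact hK3 ms h1 h2
      · omega
      · -- s = y
        rcases inv2 hkk hn htn with ⟨mt, hmt, rfl⟩ | rfl | rfl
        · -- t chain : K2
          rw [hevx, hevy, hev]
          have h2 : k' < mt := ps2_gty hkk hst
          exact hK2 mt h2 hmt
        · omega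
        · omega
    · -- q = y
      rcases inv2 hkk hn (show s < n + 2 by omega) with ⟨ms, hms, rfl⟩ | rfl | rfl
      · have h1 : k' < ms := ps2_gty hkk hqs
        rcases inv2 hkk hn htn with ⟨mt, hmt, rfl⟩ | rfl | rfl
        · rw [hevy, hev, hev]
          have h2 : ms ≤ mt := ps2_le (le_of_lt hst)
          have := ex0 Hy (iL3 (x := y)) (iL3 (x := y)) (iL2 (m := ms) (by omega))
            (iL2 (m := mt) (by omega)) le_rfl (by omega) (by omega) (by omega)
          linarith
        · omega
        · omega
      · omega
      · omega
  intro q r s t h1 h2 h3 h4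
  have A := step1 q r s h1 h2 (by omega)
  have B := step2 q s t (le_trans h1 h2) h3 h4
  linarith

end Assemble
section Half
variable {X : Type*}

set_option maxHeartbeats 2000000 in
lemma half (d : X → X → ℝ) (ε : ℝ) (p₀ q₀ : X) (a : ℕ → X) (n : ℕ)
    (x y : X) (i j i' j' : ℕ)
    (dsym : ∀ u v : X, d u v = d v u) (dself : ∀ u : X, d u u = 0)
    (dnn : ∀ u v : X, 0 ≤ d u v) (heps : 0 ≤ ε)
    (hij : i + 2 ≤ j) (hjn : j < n) (hij' : i' + 2 ≤ j') (hj'n : j' < n)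
    (cAx : ∀ m, m ≤ i → Canon d ε p₀ q₀ (a m) x)
    (cBx : ∀ m, j ≤ m → m < n → Canon d ε p₀ q₀ x (a m))
    (cNAx : ∀ m, i < m → m < n → ¬ Canon d ε p₀ q₀ (a m) x)
    (cNBx : ∀ m, m < j → ¬ Canon d ε p₀ q₀ x (a m))
    (cAy : ∀ m, m ≤ i' → Canon d ε p₀ q₀ (a m) y)
    (cBy : ∀ m, j' ≤ m → m < n → Canon d ε p₀ q₀ y (a m))
    (cNAy : ∀ m, i' < m → m < n → ¬ Canon d ε p₀ q₀ (a m) y)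
    (cNBy : ∀ m, m < j' → ¬ Canon d ε p₀ q₀ y (a m))
    (chainC : ∀ m m', m < m' → m' < n → Canon d ε p₀ q₀ (a m) (a m'))
    (OX : ∀ kk, (kk = i ∨ kk = j - 1) → ∃ k'', i' ≤ k'' ∧ k'' ≤ j' - 1 ∧
        PairHoleAdmissible d ε a n x y kk k'' 1)
    (OY : ∀ kk, (kk = i' ∨ kk = j' - 1) → ∃ k'', i ≤ k'' ∧ k'' ≤ j - 1 ∧
        PairHoleAdmissible d ε a n y x kk k'' 1)
    (hmn : ¬ (i = i' ∧ j = j' ∧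
      (d x y > max (dxVal d a x i j) (dxVal d a y i' j') + 3 * ε ∨
        d x y < max (dxVal d a x i j) (dxVal d a y i' j') - 3 * ε)))
    (k k' : ℕ) (hk : k = i ∨ k = j - 1) (hk' : k' = i' ∨ k' = j' - 1)
    (hkk : k ≤ k') :
    PairHoleAdmissible d ε a n x y k k' 12 := by
  -- basic bounds
  have hki1 : i ≤ k := by omega
  have hki2 : k ≤ j - 1 := by omega
  have hk'1 : i' ≤ k' := by omega
  have hk'2 : k' ≤ j' - 1 := by omega
  -- pair-orders from the standing assumption
  obtain ⟨k₀, hk₀l, hk₀r, P1⟩ := OX k hk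
  obtain ⟨k₁, hk₁l, hk₁r, P2⟩ := OY k' hk'
  obtain ⟨Hxk, Hyk₀, OR1⟩ := P1
  obtain ⟨Hyk', Hxk₁, OR2⟩ := P2
  obtain ⟨k₀a, hk₀al, hk₀ar, P1a⟩ := OX i (Or.inl rfl)
  obtain ⟨k₀b, hk₀bl, hk₀br, P1b⟩ := OX (j-1) (Or.inr rfl)
  obtain ⟨k₁a, hk₁al, hk₁ar, P2a⟩ := OY i' (Or.inl rfl)
  obtain ⟨k₁b, hk₁bl, hk₁br, P2b⟩ := OY (j'-1) (Or.inr rfl)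
  have HXi : HoleAdmissible d ε a n x i := P1a.1
  have HXj : HoleAdmissible d ε a n x (j-1) := P1b.1
  have HYi : HoleAdmissible d ε a n y i' := P2a.1
  have HYj : HoleAdmissible d ε a n y (j'-1) := P2b.1
  -- pairwise flatness
  have flatX : ∀ m m', i < m → m < j → i < m' → m' < j →
      d x (a m) ≤ d x (a m') + 2 * ε := by
    intro m m' h1 h2 h3 h4
    rcases le_total m m' with h | h
    · have e : insertSeq a x i (i+1) = x := iL3
      have := ex0 HXi e e (iL2 (show i < m from h1)) (iL2 (show i < m' from h3))
        le_rfl (by omega) (by omega) (by omega)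
      linarith
    · have e : insertSeq a x (j-1) ((j-1)+1) = x := iL3
      have T := ex0 HXj (iL1 (show m' ≤ j-1 by omega)) (iL1 (show m ≤ j-1 by omega)) e e
        (by omega) (by omega) le_rfl (by omega)
      rw [dsym x (a m), dsym x (a m')]
      linarith
  have flatY : ∀ m m', i' < m → m < j' → i' < m' → m' < j' →
      d y (a m) ≤ d y (a m') + 2 * ε := by
    intro m m' h1 h2 h3 h4
    rcases le_total m m' with h | h
    · have e : insertSeq a y i' (i'+1) = y := iL3
      have := ex0 HYi e e (iL2 (show i' < m from h1)) (iL2 (show i' < m' from h3))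
        le_rfl (by omega) (by omega) (by omega)
      linarith
    · have e : insertSeq a y (j'-1) ((j'-1)+1) = y := iL3
      have T := ex0 HYj (iL1 (show m' ≤ j'-1 by omega)) (iL1 (show m ≤ j'-1 by omega)) e e
        (by omega) (by omega) le_rfl (by omega)
      rw [dsym y (a m), dsym y (a m')]
      linarith
  -- dxVal bounds
  have hSX : {r | ∃ kk, i < kk ∧ kk < j ∧ r = d x (a kk)} =
      (fun kk => d x (a kk)) '' (Set.Ioo i j) := by
    ext r
    constructor
    · rintro ⟨kk, h1, h2, h3⟩; exact ⟨kk, ⟨h1, h2⟩, h3.symm⟩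
    · rintro ⟨kk, ⟨h1, h2⟩, h3⟩; exact ⟨kk, h1, h2, h3.symm⟩
  have hSXf : {r | ∃ kk, i < kk ∧ kk < j ∧ r = d x (a kk)}.Finite := by
    rw [hSX]; exact (Set.finite_Ioo i j).image _
  have hSXne : {r | ∃ kk, i < kk ∧ kk < j ∧ r = d x (a kk)}.Nonempty :=
    ⟨d x (a (i+1)), ⟨i+1, by omega, by omega, rfl⟩⟩
  have dxhi : ∀ m, i < m → m < j → d x (a m) ≤ dxVal d a x i j + 2 * ε := by
    intro m h1 h2
    have hle : d x (a m) ≤ sSup {r | ∃ kk, i < kk ∧ kk < j ∧ r = d x (a kk)} :=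
      le_csSup hSXf.bddAbove ⟨m, h1, h2, rfl⟩
    have hge : d x (a m) - 2*ε ≤ sInf {r | ∃ kk, i < kk ∧ kk < j ∧ r = d x (a kk)} := by
      apply le_csInf hSXne
      rintro r ⟨kk, hh1, hh2, rfl⟩
      have := flatX m kk h1 h2 hh1 hh2
      linarith
    unfold dxVal
    linarith
  have dxlo : ∀ m, i < m → m < j → dxVal d a x i j ≤ d x (a m) + 2 * ε := by
    intro m h1 h2
    have hle : sInf {r | ∃ kk, i < kk ∧ kk < j ∧ r = d x (a kk)} ≤ d x (a m) :=
      csInf_le hSXf.bddBelow ⟨m, h1, h2, rfl⟩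
    have hge : sSup {r | ∃ kk, i < kk ∧ kk < j ∧ r = d x (a kk)} ≤ d x (a m) + 2*ε := by
      apply csSup_le hSXne
      rintro r ⟨kk, hh1, hh2, rfl⟩
      have := flatX kk m hh1 hh2 h1 h2
      linarith
    unfold dxVal
    linarith
  have hSY : {r | ∃ kk, i' < kk ∧ kk < j' ∧ r = d y (a kk)} =
      (fun kk => d y (a kk)) '' (Set.Ioo i' j') := by
    ext r
    constructor
    · rintro ⟨kk, h1, h2, h3⟩; exact ⟨kk, ⟨h1, h2⟩, h3.symm⟩
    · rintro ⟨kk, ⟨h1, h2⟩, h3⟩; exact ⟨kk, h1, h2, h3.symm⟩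
  have hSYf : {r | ∃ kk, i' < kk ∧ kk < j' ∧ r = d y (a kk)}.Finite := by
    rw [hSY]; exact (Set.finite_Ioo i' j').image _
  have hSYne : {r | ∃ kk, i' < kk ∧ kk < j' ∧ r = d y (a kk)}.Nonempty :=
    ⟨d y (a (i'+1)), ⟨i'+1, by omega, by omega, rfl⟩⟩
  have dyhi : ∀ m, i' < m → m < j' → d y (a m) ≤ dxVal d a y i' j' + 2 * ε := by
    intro m h1 h2
    have hle : d y (a m) ≤ sSup {r | ∃ kk, i' < kk ∧ kk < j' ∧ r = d y (a kk)} :=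
      le_csSup hSYf.bddAbove ⟨m, h1, h2, rfl⟩
    have hge : d y (a m) - 2*ε ≤ sInf {r | ∃ kk, i' < kk ∧ kk < j' ∧ r = d y (a kk)} := by
      apply le_csInf hSYne
      rintro r ⟨kk, hh1, hh2, rfl⟩
      have := flatY m kk h1 h2 hh1 hh2
      linarith
    unfold dxVal
    linarith
  have dylo : ∀ m, i' < m → m < j' → dxVal d a y i' j' ≤ d y (a m) + 2 * ε := by
    intro m h1 h2
    have hle : sInf {r | ∃ kk, i' < kk ∧ kk < j' ∧ r = d y (a kk)} ≤ d y (a m) :=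
      csInf_le hSYf.bddBelow ⟨m, h1, h2, rfl⟩
    have hge : sSup {r | ∃ kk, i' < kk ∧ kk < j' ∧ r = d y (a kk)} ≤ d y (a m) + 2*ε := by
      apply csSup_le hSYne
      rintro r ⟨kk, hh1, hh2, rfl⟩
      have := flatY kk m hh1 hh2 h1 h2
      linarith
    unfold dxVal
    linarith
  rcases eq_or_lt_of_le hkk with heq | hlt
  · -- CASE E : equal holes
    subst heq
    by_cases h0 : k₀ = k
    · subst h0
      refine ⟨Hxk, Hyk', ?_⟩
      rcases OR1 with ⟨h01, C⟩ | ⟨h01, C⟩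
      · exact Or.inl ⟨le_rfl, seq_mono C (by linarith)⟩
      · exact Or.inr ⟨le_rfl, seq_mono C (by linarith)⟩
    by_cases h1 : k₁ = k
    · subst h1
      refine ⟨Hxk, Hyk', ?_⟩
      rcases OR2 with ⟨h21, C⟩ | ⟨h21, C⟩
      · exact Or.inr ⟨le_rfl, seq_mono C (by linarith)⟩
      · exact Or.inl ⟨le_rfl, seq_mono C (by linarith)⟩
    refine ⟨Hxk, Hyk', ?_⟩
    rcases hk with hki | hkj
    · rcases hk' with hki' | hkj'
      · -- E-I : k = i = i'
        obtain ⟨hk₀, C1⟩ : k < k₀ ∧ SeqCompatible d (insertSeq2 a x y k k₀) (n+2) (1*ε) := by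
          rcases OR1 with ⟨h01, C⟩ | ⟨h01, C⟩
          · exact ⟨by omega, C⟩
          · exfalso; omega
        obtain ⟨hk₁, C2⟩ : k < k₁ ∧ SeqCompatible d (insertSeq2 a y x k k₁) (n+2) (1*ε) := by
          rcases OR2 with ⟨h21, C⟩ | ⟨h21, C⟩
          · exact ⟨by omega, C⟩
          · exfalso; omega
        by_cases hEa : k₁ + 1 < j'
        · -- y-first target
          have e1 : insertSeq2 a y x k k₁ (k₁+1+2) = a (k₁+1) := iM3 (le_of_lt hk₁) (by omega)
          have wY := ex0 C2 iM4 iM4 (iM5 (le_of_lt hk₁)) e1 le_rfl (by omega) (by omega) (by omega)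
          refine Or.inr ⟨le_rfl, assemble dself dnn heps le_rfl (by omega) Hyk' Hxk ?_ ?_ ?_ ?_ ?_ ?_⟩
          · intro α hα
            have := ex0 C2 (iM1 hα) iM4 (iM5 (le_of_lt hk₁)) (iM5 (le_of_lt hk₁))
              (by omega) (by omega) le_rfl (by omega)
            linarith
          · intro γ hγ1 hγ2
            by_cases hc : k₁ < γ
            · have e2 : insertSeq2 a y x k k₁ (γ+2) = a γ := iM3 (le_of_lt hk₁) hc
              have := ex0 C2 iM4 iM4 (iM5 (le_of_lt hk₁)) e2 le_rfl (by omega) (by omega) (by omega)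
              linarith
            · have F := flatY (k₁+1) γ (by omega) (by omega) (by omega) (by omega)
              linarith
          · intro β hβ1 hβ2; exfalso; omega
          · intro β hβ1 hβ2; exfalso; omega
          · intro α hα
            have := ex0 C2 (iM1 hα) (iM1 hα) iM4 (iM5 (le_of_lt hk₁))
              le_rfl (by omega) (by omega) (by omega)
            linarith
          · intro γ hγ1 hγ2
            by_cases hc : k₁ < γ
            · have e2 : insertSeq2 a y x k k₁ (γ+2) = a γ := iM3 (le_of_lt hk₁) hc
              have := ex0 C2 iM4 (iM5 (le_of_lt hk₁)) e2 e2 (by omega) (by omega) le_rfl (by omega)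
              linarith
            · have e2 : insertSeq2 a y x k k₁ (γ+1) = a γ := iM2 hγ1 (by omega)
              have T := ex0 C2 iM4 e2 (iM5 (le_of_lt hk₁)) (iM5 (le_of_lt hk₁))
                (by omega) (by omega) le_rfl (by omega)
              have F := flatY (k₁+1) γ (by omega) (by omega) (by omega) (by omega)
              rw [dsym x (a γ)]
              linarith
        · by_cases hEb : k₀ + 1 < j
          · -- x-first target
            have e1 : insertSeq2 a x y k k₀ (k₀+1+2) = a (k₀+1) := iM3 (le_of_lt hk₀) (by omega)
            have wX := ex0 C1 iM4 iM4 (iM5 (le_of_lt hk₀)) e1 le_rfl (by omega) (by omega) (by omega)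
            refine Or.inl ⟨le_rfl, assemble dself dnn heps le_rfl (by omega) Hxk Hyk' ?_ ?_ ?_ ?_ ?_ ?_⟩
            · intro α hα
              have := ex0 C1 (iM1 hα) iM4 (iM5 (le_of_lt hk₀)) (iM5 (le_of_lt hk₀))
                (by omega) (by omega) le_rfl (by omega)
              linarith
            · intro γ hγ1 hγ2
              by_cases hc : k₀ < γ
              · have e2 : insertSeq2 a x y k k₀ (γ+2) = a γ := iM3 (le_of_lt hk₀) hc
                have := ex0 C1 iM4 iM4 (iM5 (le_of_lt hk₀)) e2 le_rfl (by omega) (by omega) (by omega)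
                linarith
              · have F := flatX (k₀+1) γ (by omega) (by omega) (by omega) (by omega)
                linarith
            · intro β hβ1 hβ2; exfalso; omega
            · intro β hβ1 hβ2; exfalso; omega
            · intro α hα
              have := ex0 C1 (iM1 hα) (iM1 hα) iM4 (iM5 (le_of_lt hk₀))
                le_rfl (by omega) (by omega) (by omega)
              linarith
            · intro γ hγ1 hγ2
              by_cases hc : k₀ < γ
              · have e2 : insertSeq2 a x y k k₀ (γ+2) = a γ := iM3 (le_of_lt hk₀) hc
                have := ex0 C1 iM4 (iM5 (le_of_lt hk₀)) e2 e2 (by omega) (by omega) le_rfl (by omega)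
                linarith
              · have e2 : insertSeq2 a x y k k₀ (γ+1) = a γ := iM2 hγ1 (by omega)
                have T := ex0 C1 iM4 e2 (iM5 (le_of_lt hk₀)) (iM5 (le_of_lt hk₀))
                  (by omega) (by omega) le_rfl (by omega)
                have F := flatX (k₀+1) γ (by omega) (by omega) (by omega) (by omega)
                rw [dsym y (a γ)]
                linarith
          · -- E-I-c : j = j', k₀ = j-1, k₁ = j-1, i = i'
            have hjj : j = j' := by omega
            have hM1 : ¬ (d x y > max (dxVal d a x i j) (dxVal d a y i' j') + 3 * ε ∨
                d x y < max (dxVal d a x i j) (dxVal d a y i' j') - 3 * ε) :=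
              fun h => hmn ⟨by omega, hjj, h⟩
            push_neg at hM1
            rcases le_total (dxVal d a x i j) (dxVal d a y i' j') with hMx | hMx
            · -- y-first
              have hmx : max (dxVal d a x i j) (dxVal d a y i' j') = dxVal d a y i' j' :=
                max_eq_right hMx
              rw [hmx] at hM1
              refine Or.inr ⟨le_rfl, assemble dself dnn heps le_rfl (by omega) Hyk' Hxk ?_ ?_ ?_ ?_ ?_ ?_⟩
              · intro α hα
                have := ex0 C2 (iM1 hα) iM4 (iM5 (le_of_lt hk₁)) (iM5 (le_of_lt hk₁))
                  (by omega) (by omega) le_rfl (by omega)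
                linarith
              · intro γ hγ1 hγ2
                by_cases hc : k₁ < γ
                · have e2 : insertSeq2 a y x k k₁ (γ+2) = a γ := iM3 (le_of_lt hk₁) hc
                  have := ex0 C2 iM4 iM4 (iM5 (le_of_lt hk₁)) e2 le_rfl (by omega) (by omega) (by omega)
                  linarith
                · have hd := dylo γ (by omega) (by omega)
                  rw [dsym y x]
                  linarith [hM1.1]
              · intro β hβ1 hβ2; exfalso; omega
              · intro β hβ1 hβ2; exfalso; omega
              · intro α hα
                have := ex0 C2 (iM1 hα) (iM1 hα) iM4 (iM5 (le_of_lt hk₁))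
                  le_rfl (by omega) (by omega) (by omega)
                linarith
              · intro γ hγ1 hγ2
                by_cases hc : k₁ < γ
                · have e2 : insertSeq2 a y x k k₁ (γ+2) = a γ := iM3 (le_of_lt hk₁) hc
                  have := ex0 C2 iM4 (iM5 (le_of_lt hk₁)) e2 e2 (by omega) (by omega) le_rfl (by omega)
                  linarith
                · have e2 : insertSeq2 a x y k k₀ (γ+1) = a γ := iM2 hγ1 (by omega)
                  have T := ex0 C1 iM4 iM4 e2 (iM5 (le_of_lt hk₀)) le_rfl (by omega) (by omega) (by omega)
                  have hd := dylo γ (by omega) (by omega)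
                  linarith [hM1.1]
            · -- x-first
              have hmx : max (dxVal d a x i j) (dxVal d a y i' j') = dxVal d a x i j :=
                max_eq_left hMx
              rw [hmx] at hM1
              refine Or.inl ⟨le_rfl, assemble dself dnn heps le_rfl (by omega) Hxk Hyk' ?_ ?_ ?_ ?_ ?_ ?_⟩
              · intro α hα
                have := ex0 C1 (iM1 hα) iM4 (iM5 (le_of_lt hk₀)) (iM5 (le_of_lt hk₀))
                  (by omega) (by omega) le_rfl (by omega)
                linarith
              · intro γ hγ1 hγ2
                by_cases hc : k₀ < γ
                · have e2 : insertSeq2 a x y k k₀ (γ+2) = a γ := iM3 (le_of_lt hk₀) hc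
                  have := ex0 C1 iM4 iM4 (iM5 (le_of_lt hk₀)) e2 le_rfl (by omega) (by omega) (by omega)
                  linarith
                · have hd := dxlo γ (by omega) (by omega)
                  linarith [hM1.1]
              · intro β hβ1 hβ2; exfalso; omega
              · intro β hβ1 hβ2; exfalso; omega
              · intro α hα
                have := ex0 C1 (iM1 hα) (iM1 hα) iM4 (iM5 (le_of_lt hk₀))
                  le_rfl (by omega) (by omega) (by omega)
                linarith
              · intro γ hγ1 hγ2
                by_cases hc : k₀ < γ
                · have e2 : insertSeq2 a x y k k₀ (γ+2) = a γ := iM3 (le_of_lt hk₀) hc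
                  have := ex0 C1 iM4 (iM5 (le_of_lt hk₀)) e2 e2 (by omega) (by omega) le_rfl (by omega)
                  linarith
                · have e2 : insertSeq2 a y x k k₁ (γ+1) = a γ := iM2 hγ1 (by omega)
                  have T := ex0 C2 iM4 iM4 e2 (iM5 (le_of_lt hk₁)) le_rfl (by omega) (by omega) (by omega)
                  have hd := dxlo γ (by omega) (by omega)
                  rw [dsym y (a γ), dsym y x] at T
                  rw [dsym y (a γ)]
                  linarith [hM1.1]
      · -- E-II : k = i = j'-1
        obtain ⟨hk₀, C1⟩ : k₀ < k ∧ SeqCompatible d (insertSeq2 a y x k₀ k) (n+2) (1*ε) := by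
          rcases OR1 with ⟨h01, C⟩ | ⟨h01, C⟩
          · exfalso; omega
          · exact ⟨by omega, C⟩
        obtain ⟨hk₁, C2⟩ : k < k₁ ∧ SeqCompatible d (insertSeq2 a y x k k₁) (n+2) (1*ε) := by
          rcases OR2 with ⟨h21, C⟩ | ⟨h21, C⟩
          · exact ⟨by omega, C⟩
          · exfalso; omega
        refine Or.inr ⟨le_rfl, assemble dself dnn heps le_rfl (by omega) Hyk' Hxk ?_ ?_ ?_ ?_ ?_ ?_⟩
        · intro α hα
          have := ex0 C2 (iM1 hα) iM4 (iM5 (le_of_lt hk₁)) (iM5 (le_of_lt hk₁))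
            (by omega) (by omega) le_rfl (by omega)
          linarith
        · intro γ hγ1 hγ2
          have e2 : insertSeq2 a y x k₀ k (γ+2) = a γ := iM3 (le_of_lt hk₀) hγ1
          have := ex0 C1 iM4 iM4 (iM5 (le_of_lt hk₀)) e2 le_rfl (by omega) (by omega) (by omega)
          linarith
        · intro β hβ1 hβ2; exfalso; omega
        · intro β hβ1 hβ2; exfalso; omega
        · intro α hα
          by_cases hc : α ≤ k₀
          · have := ex0 C1 (iM1 hc) (iM1 hc) iM4 (iM5 (le_of_lt hk₀))
              le_rfl (by omega) (by omega) (by omega)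
            linarith
          · have e2 : insertSeq2 a y x k₀ k (α+1) = a α := iM2 (by omega) hα
            have T := ex0 C1 iM4 iM4 e2 (iM5 (le_of_lt hk₀)) le_rfl (by omega) (by omega) (by omega)
            have T2 := ex0 C2 (iM1 hα) iM4 (iM5 (le_of_lt hk₁)) (iM5 (le_of_lt hk₁))
              (by omega) (by omega) le_rfl (by omega)
            rw [dsym (a α) y]
            linarith
        · intro γ hγ1 hγ2
          have e2 : insertSeq2 a y x k₀ k (γ+2) = a γ := iM3 (le_of_lt hk₀) hγ1
          have := ex0 C1 iM4 (iM5 (le_of_lt hk₀)) e2 e2 (by omega) (by omega) le_rfl (by omega)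
          linarith
    · rcases hk' with hki' | hkj'
      · -- E-III : k = j-1 = i'
        obtain ⟨hk₀, C1⟩ : k < k₀ ∧ SeqCompatible d (insertSeq2 a x y k k₀) (n+2) (1*ε) := by
          rcases OR1 with ⟨h01, C⟩ | ⟨h01, C⟩
          · exact ⟨by omega, C⟩
          · exfalso; omega
        obtain ⟨hk₁, C2⟩ : k₁ < k ∧ SeqCompatible d (insertSeq2 a x y k₁ k) (n+2) (1*ε) := by
          rcases OR2 with ⟨h21, C⟩ | ⟨h21, C⟩
          · exfalso; omega
          · exact ⟨by omega, C⟩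
        refine Or.inl ⟨le_rfl, assemble dself dnn heps le_rfl (by omega) Hxk Hyk' ?_ ?_ ?_ ?_ ?_ ?_⟩
        · intro α hα
          have := ex0 C1 (iM1 hα) iM4 (iM5 (le_of_lt hk₀)) (iM5 (le_of_lt hk₀))
            (by omega) (by omega) le_rfl (by omega)
          linarith
        · intro γ hγ1 hγ2
          have e2 : insertSeq2 a x y k₁ k (γ+2) = a γ := iM3 (le_of_lt hk₁) hγ1
          have := ex0 C2 iM4 iM4 (iM5 (le_of_lt hk₁)) e2 le_rfl (by omega) (by omega) (by omega)
          linarith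
        · intro β hβ1 hβ2; exfalso; omega
        · intro β hβ1 hβ2; exfalso; omega
        · intro α hα
          by_cases hc : α ≤ k₁
          · have := ex0 C2 (iM1 hc) (iM1 hc) iM4 (iM5 (le_of_lt hk₁))
              le_rfl (by omega) (by omega) (by omega)
            linarith
          · have e2 : insertSeq2 a x y k₁ k (α+1) = a α := iM2 (by omega) hα
            have T := ex0 C2 iM4 iM4 e2 (iM5 (le_of_lt hk₁)) le_rfl (by omega) (by omega) (by omega)
            have T2 := ex0 C1 (iM1 hα) iM4 (iM5 (le_of_lt hk₀)) (iM5 (le_of_lt hk₀))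
              (by omega) (by omega) le_rfl (by omega)
            rw [dsym (a α) x]
            linarith
        · intro γ hγ1 hγ2
          have e2 : insertSeq2 a x y k₁ k (γ+2) = a γ := iM3 (le_of_lt hk₁) hγ1
          have := ex0 C2 iM4 (iM5 (le_of_lt hk₁)) e2 e2 (by omega) (by omega) le_rfl (by omega)
          linarith
      · -- E-IV : k = j-1 = j'-1
        have hjj : j = j' := by omega
        obtain ⟨hk₀, C1⟩ : k₀ < k ∧ SeqCompatible d (insertSeq2 a y x k₀ k) (n+2) (1*ε) := by
          rcases OR1 with ⟨h01, C⟩ | ⟨h01, C⟩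
          · exfalso; omega
          · exact ⟨by omega, C⟩
        obtain ⟨hk₁, C2⟩ : k₁ < k ∧ SeqCompatible d (insertSeq2 a x y k₁ k) (n+2) (1*ε) := by
          rcases OR2 with ⟨h21, C⟩ | ⟨h21, C⟩
          · exfalso; omega
          · exact ⟨by omega, C⟩
        by_cases hEa : i' < k₁
        · -- x-first
          have wY := ex0 C2 (iM1 (le_refl k₁)) iM4 (iM5 (le_of_lt hk₁)) (iM5 (le_of_lt hk₁))
            (by omega) (by omega) le_rfl (by omega)
          refine Or.inl ⟨le_rfl, assemble dself dnn heps le_rfl (by omega) Hxk Hyk' ?_ ?_ ?_ ?_ ?_ ?_⟩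
          · intro α hα
            have F := flatY k₁ k (by omega) (by omega) (by omega) (by omega)
            have e3 : insertSeq a y k (k+1) = y := iL3
            have T2 := ex0 Hyk' (iL1 hα) (iL1 (le_refl k)) e3 e3 (by omega) (by omega)
              le_rfl (by omega)
            rw [dsym y (a k₁), dsym y (a k)] at F
            linarith
          · intro γ hγ1 hγ2
            have e2 : insertSeq2 a x y k₁ k (γ+2) = a γ := iM3 (le_of_lt hk₁) hγ1
            have := ex0 C2 iM4 iM4 (iM5 (le_of_lt hk₁)) e2 le_rfl (by omega) (by omega) (by omega)
            linarith
          · intro β hβ1 hβ2; exfalso; omega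
          · intro β hβ1 hβ2; exfalso; omega
          · intro α hα
            by_cases hc : α ≤ k₁
            · have := ex0 C2 (iM1 hc) (iM1 hc) iM4 (iM5 (le_of_lt hk₁))
                le_rfl (by omega) (by omega) (by omega)
              linarith
            · have e2 : insertSeq2 a x y k₁ k (α+1) = a α := iM2 (by omega) hα
              have T := ex0 C2 iM4 iM4 e2 (iM5 (le_of_lt hk₁)) le_rfl (by omega) (by omega) (by omega)
              have F := flatY k₁ α (by omega) (by omega) (by omega) (by omega)
              rw [dsym y (a k₁), dsym y (a α)] at F
              rw [dsym (a α) x]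
              linarith
          · intro γ hγ1 hγ2
            have e2 : insertSeq2 a x y k₁ k (γ+2) = a γ := iM3 (le_of_lt hk₁) hγ1
            have := ex0 C2 iM4 (iM5 (le_of_lt hk₁)) e2 e2 (by omega) (by omega) le_rfl (by omega)
            linarith
        · by_cases hEb : i < k₀
          · -- y-first
            have wX := ex0 C1 (iM1 (le_refl k₀)) iM4 (iM5 (le_of_lt hk₀)) (iM5 (le_of_lt hk₀))
              (by omega) (by omega) le_rfl (by omega)
            refine Or.inr ⟨le_rfl, assemble dself dnn heps le_rfl (by omega) Hyk' Hxk ?_ ?_ ?_ ?_ ?_ ?_⟩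
            · intro α hα
              have F := flatX k₀ k (by omega) (by omega) (by omega) (by omega)
              have e3 : insertSeq a x k (k+1) = x := iL3
              have T2 := ex0 Hxk (iL1 hα) (iL1 (le_refl k)) e3 e3 (by omega) (by omega)
                le_rfl (by omega)
              rw [dsym x (a k₀), dsym x (a k)] at F
              linarith
            · intro γ hγ1 hγ2
              have e2 : insertSeq2 a y x k₀ k (γ+2) = a γ := iM3 (le_of_lt hk₀) hγ1
              have := ex0 C1 iM4 iM4 (iM5 (le_of_lt hk₀)) e2 le_rfl (by omega) (by omega) (by omega)
              linarith
            · intro β hβ1 hβ2; exfalso; omega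
            · intro β hβ1 hβ2; exfalso; omega
            · intro α hα
              by_cases hc : α ≤ k₀
              · have := ex0 C1 (iM1 hc) (iM1 hc) iM4 (iM5 (le_of_lt hk₀))
                  le_rfl (by omega) (by omega) (by omega)
                linarith
              · have e2 : insertSeq2 a y x k₀ k (α+1) = a α := iM2 (by omega) hα
                have T := ex0 C1 iM4 iM4 e2 (iM5 (le_of_lt hk₀)) le_rfl (by omega) (by omega) (by omega)
                have F := flatX k₀ α (by omega) (by omega) (by omega) (by omega)
                rw [dsym x (a k₀), dsym x (a α)] at F
                rw [dsym (a α) y]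
                linarith
            · intro γ hγ1 hγ2
              have e2 : insertSeq2 a y x k₀ k (γ+2) = a γ := iM3 (le_of_lt hk₀) hγ1
              have := ex0 C1 iM4 (iM5 (le_of_lt hk₀)) e2 e2 (by omega) (by omega) le_rfl (by omega)
              linarith
          · -- E-IV-c : i = i' = k₀ = k₁
            have hM1 : ¬ (d x y > max (dxVal d a x i j) (dxVal d a y i' j') + 3 * ε ∨
                d x y < max (dxVal d a x i j) (dxVal d a y i' j') - 3 * ε) :=
              fun h => hmn ⟨by omega, hjj, h⟩
            push_neg at hM1
            rcases le_total (dxVal d a x i j) (dxVal d a y i' j') with hMx | hMx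
            · -- x-first (max = dyV)
              have hmx : max (dxVal d a x i j) (dxVal d a y i' j') = dxVal d a y i' j' :=
                max_eq_right hMx
              rw [hmx] at hM1
              refine Or.inl ⟨le_rfl, assemble dself dnn heps le_rfl (by omega) Hxk Hyk' ?_ ?_ ?_ ?_ ?_ ?_⟩
              · intro α hα
                have hd := dylo k (by omega) (by omega)
                have e3 : insertSeq a y k (k+1) = y := iL3
                have T2 := ex0 Hyk' (iL1 hα) (iL1 (le_refl k)) e3 e3 (by omega) (by omega)
                  le_rfl (by omega)
                rw [dsym y (a k)] at hd
                linarith [hM1.1]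
              · intro γ hγ1 hγ2
                have e2 : insertSeq2 a x y k₁ k (γ+2) = a γ := iM3 (le_of_lt hk₁) hγ1
                have := ex0 C2 iM4 iM4 (iM5 (le_of_lt hk₁)) e2 le_rfl (by omega) (by omega) (by omega)
                linarith
              · intro β hβ1 hβ2; exfalso; omega
              · intro β hβ1 hβ2; exfalso; omega
              · intro α hα
                by_cases hc : α ≤ k₁
                · have := ex0 C2 (iM1 hc) (iM1 hc) iM4 (iM5 (le_of_lt hk₁))
                    le_rfl (by omega) (by omega) (by omega)
                  linarith
                · have e2 : insertSeq2 a y x k₀ k (α+1) = a α := iM2 (by omega) hα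
                  have T := ex0 C1 iM4 e2 (iM5 (le_of_lt hk₀)) (iM5 (le_of_lt hk₀))
                    (by omega) (by omega) le_rfl (by omega)
                  have hd := dylo α (by omega) (by omega)
                  rw [dsym (a α) x, dsym y x] at T
                  rw [dsym (a α) x, dsym (a α) y]
                  linarith [hM1.1]
              · intro γ hγ1 hγ2
                have e2 : insertSeq2 a x y k₁ k (γ+2) = a γ := iM3 (le_of_lt hk₁) hγ1
                have := ex0 C2 iM4 (iM5 (le_of_lt hk₁)) e2 e2 (by omega) (by omega) le_rfl (by omega)
                linarith
            · -- y-first (max = dxV)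
              have hmx : max (dxVal d a x i j) (dxVal d a y i' j') = dxVal d a x i j :=
                max_eq_left hMx
              rw [hmx] at hM1
              refine Or.inr ⟨le_rfl, assemble dself dnn heps le_rfl (by omega) Hyk' Hxk ?_ ?_ ?_ ?_ ?_ ?_⟩
              · intro α hα
                have hd := dxlo k (by omega) (by omega)
                have e3 : insertSeq a x k (k+1) = x := iL3
                have T2 := ex0 Hxk (iL1 hα) (iL1 (le_refl k)) e3 e3 (by omega) (by omega)
                  le_rfl (by omega)
                rw [dsym x (a k)] at hd
                rw [dsym y x]
                linarith [hM1.1]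
              · intro γ hγ1 hγ2
                have e2 : insertSeq2 a y x k₀ k (γ+2) = a γ := iM3 (le_of_lt hk₀) hγ1
                have := ex0 C1 iM4 iM4 (iM5 (le_of_lt hk₀)) e2 le_rfl (by omega) (by omega) (by omega)
                linarith
              · intro β hβ1 hβ2; exfalso; omega
              · intro β hβ1 hβ2; exfalso; omega
              · intro α hα
                by_cases hc : α ≤ k₀
                · have := ex0 C1 (iM1 hc) (iM1 hc) iM4 (iM5 (le_of_lt hk₀))
                    le_rfl (by omega) (by omega) (by omega)
                  linarith
                · have e2 : insertSeq2 a x y k₁ k (α+1) = a α := iM2 (by omega) hα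
                  have T := ex0 C2 iM4 e2 (iM5 (le_of_lt hk₁)) (iM5 (le_of_lt hk₁))
                    (by omega) (by omega) le_rfl (by omega)
                  have hd := dxlo α (by omega) (by omega)
                  rw [dsym (a α) y]
                  rw [dsym (a α) y] at T
                  rw [dsym x (a α)] at hd
                  linarith [hM1.1]
              · intro γ hγ1 hγ2
                have e2 : insertSeq2 a y x k₀ k (γ+2) = a γ := iM3 (le_of_lt hk₀) hγ1
                have := ex0 C1 iM4 (iM5 (le_of_lt hk₀)) e2 e2 (by omega) (by omega) le_rfl (by omega)
                linarith
  · -- CASE S : k < k'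
    have K1 : ∀ α, α ≤ k → d x y ≤ d (a α) y + 12 * ε := by
      intro α hα
      rcases OR1 with ⟨h01, C⟩ | ⟨h01, C⟩
      · have := ex0 C (iM1 hα) iM4 (iM5 h01) (iM5 h01)
          (by omega) (by omega) le_rfl (by omega)
        linarith
      · have e1 : insertSeq2 a y x k₀ k (k+1+2) = a (k+1) := iM3 h01 (by omega)
        have T1 := ex0 C iM4 iM4 (iM5 h01) e1 le_rfl (by omega) (by omega) (by omega)
        have e2 : insertSeq a y k' (k'+1) = y := iL3
        have T2 := ex0 Hyk' (iL1 (show α ≤ k' by omega)) (iL1 (show k+1 ≤ k' by omega)) e2 e2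
          (by omega) (by omega) le_rfl (by omega)
        rw [dsym x y]
        rw [dsym y (a (k+1))] at T1
        linarith
    have K2 : ∀ γ, k' < γ → γ < n → d x y ≤ d x (a γ) + 12 * ε := by
      intro γ hγ1 hγ2
      rcases OR2 with ⟨h21, C⟩ | ⟨h21, C⟩
      · have T1 := ex0 C (iM1 (le_refl k')) iM4 (iM5 h21) (iM5 h21)
          (by omega) (by omega) le_rfl (by omega)
        rw [dsym x y]
        rw [dsym (a k') x] at T1
        by_cases hγj : γ < j
        · have F := flatX k' γ (by omega) (by omega) (by omega) (by omega)
          linarith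
        · have F := flatX k' (j-1) (by omega) (by omega) (by omega) (by omega)
          have e1 : insertSeq a x i (i+1) = x := iL3
          have T2 := ex0 HXi e1 e1 (iL2 (show i < j-1 by omega)) (iL2 (show i < γ by omega))
            le_rfl (by omega) (by omega) (by omega)
          linarith
      · have e1 : insertSeq2 a x y k₁ k' (γ+2) = a γ := iM3 h21 (by omega)
        have := ex0 C iM4 iM4 (iM5 h21) e1 le_rfl (by omega) (by omega) (by omega)
        linarith
    have K5 : ∀ α, α ≤ k → d (a α) x ≤ d (a α) y + 12 * ε := by
      intro α hα
      rcases OR1 with ⟨h01, C⟩ | ⟨h01, C⟩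
      · have := ex0 C (iM1 hα) (iM1 hα) iM4 (iM5 h01) le_rfl (by omega) (by omega) (by omega)
        linarith
      · have eα : insertSeq2 a y x k₀ k (ps2 k₀ k α) = a α := iP2 h01
        have e1 : insertSeq2 a y x k₀ k (k+1+2) = a (k+1) := iM3 h01 (by omega)
        have hpα : ps2 k₀ k α ≤ k + 2 := by unfold ps2; split_ifs <;> omega
        have T1 := ex0 C eα eα (iM5 h01) e1 le_rfl hpα (by omega) (by omega)
        have F := fne3b (chainC α (k+1) (by omega) (by omega)) (cNBy (k+1) (by omega))
        have e2 : insertSeq a y k' (k'+1) = y := iL3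
        have T2 := ex0 Hyk' (iL1 (show α ≤ k' by omega)) (iL1 (show k+1 ≤ k' by omega)) e2 e2
          (by omega) (by omega) le_rfl (by omega)
        rcases max_cases (d (a α) y) (d y (a (k+1))) with ⟨hm, _⟩ | ⟨hm, _⟩ <;> rw [hm] at F
        · linarith
        · rw [dsym y (a (k+1))] at F
          linarith
    have K6 : ∀ γ, k' < γ → γ < n → d y (a γ) ≤ d x (a γ) + 12 * ε := by
      intro γ hγ1 hγ2
      rcases OR2 with ⟨h21, C⟩ | ⟨h21, C⟩
      · have eγ : insertSeq2 a y x k' k₁ (ps2 k' k₁ γ) = a γ := iP2 h21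
        have hpγ : k' + 1 ≤ ps2 k' k₁ γ := by unfold ps2; split_ifs <;> omega
        have T1 := ex0 C (iM1 (le_refl k')) iM4 eγ eγ (by omega) hpγ le_rfl (ps2_ltn hγ2)
        have F := fne3a (chainC k' γ (by omega) hγ2) (cNAx k' (by omega) (by omega))
        rcases max_cases (d (a k') x) (d x (a γ)) with ⟨hm, _⟩ | ⟨hm, _⟩ <;> rw [hm] at F
        · rw [dsym (a k') x] at F
          by_cases hγj : γ < j
          · have F2 := flatX k' γ (by omega) (by omega) (by omega) (by omega)
            linarith
          · have F2 := flatX k' (j-1) (by omega) (by omega) (by omega) (by omega)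
            have e1 : insertSeq a x i (i+1) = x := iL3
            have T2 := ex0 HXi e1 e1 (iL2 (show i < j-1 by omega)) (iL2 (show i < γ by omega))
              le_rfl (by omega) (by omega) (by omega)
            linarith
        · linarith
      · have e1 : insertSeq2 a x y k₁ k' (γ+2) = a γ := iM3 h21 (by omega)
        have := ex0 C iM4 (iM5 h21) e1 e1 (by omega) (by omega) le_rfl (by omega)
        linarith
    have CX : ∀ β, k = i → i < β → β < j → d x (a β) ≤ d x y + 12 * ε := by
      intro β hki hb3 hb4
      have E : ∃ m, i < m ∧ m < j ∧ d x (a m) ≤ d x y + 8 * ε := by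
        rcases lt_trichotomy i i' with hii | hii | hii
        · rcases OR1 with ⟨h01, C⟩ | ⟨h01, C⟩
          · refine ⟨i+1, by omega, by omega, ?_⟩
            have e1 : insertSeq2 a x y k k₀ (i+1+1) = a (i+1) := iM2 (by omega) (by omega)
            have := ex0 C iM4 iM4 e1 (iM5 h01) le_rfl (by omega) (by omega) (by omega)
            linarith
          · exfalso; omega
        · rcases lt_trichotomy j j' with hjj | hjj | hjj
          · obtain ⟨k₄, hk₄l, hk₄r, P⟩ := OY (j'-1) (Or.inr rfl)
            rcases P.2.2 with ⟨hb, C⟩ | ⟨hb, C⟩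
            · exfalso; omega
            · by_cases hc : k₄ < j-1
              · refine ⟨j-1, by omega, by omega, ?_⟩
                have e1 : insertSeq2 a x y k₄ (j'-1) ((j-1)+1) = a (j-1) := iM2 hc (by omega)
                have := ex0 C iM4 iM4 e1 (iM5 hb) le_rfl (by omega) (by omega) (by omega)
                linarith
              · refine ⟨j-1, by omega, by omega, ?_⟩
                have e1 : insertSeq2 a x y k₄ (j'-1) (j+1) = a j := iM2 (by omega) (by omega)
                have T1 := ex0 C iM4 iM4 e1 (iM5 hb) le_rfl (by omega) (by omega) (by omega)
                have e3 : insertSeq a x i (i+1) = x := iL3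
                have T2 := ex0 HXi e3 e3 (iL2 (show i < j-1 by omega))
                  (iL2 (show i < j by omega)) le_rfl (by omega) (by omega) (by omega)
                linarith
          · refine ⟨i+1, by omega, by omega, ?_⟩
            have hM1 : ¬ (d x y > max (dxVal d a x i j) (dxVal d a y i' j') + 3 * ε ∨
                d x y < max (dxVal d a x i j) (dxVal d a y i' j') - 3 * ε) :=
              fun h => hmn ⟨hii, hjj, h⟩
            push_neg at hM1
            have h1 := dxhi (i+1) (by omega) (by omega)
            have h2 : dxVal d a x i j ≤ max (dxVal d a x i j) (dxVal d a y i' j') :=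
              le_max_left _ _
            linarith [hM1.2]
          · rcases P1b.2.2 with ⟨hb, C⟩ | ⟨hb, C⟩
            · exfalso; omega
            · have e1 : insertSeq2 a y x k₀b (j-1) (j'+1) = a j' := iM2 (by omega) (by omega)
              have T1 := ex0 C iM4 iM4 e1 (iM5 hb) le_rfl (by omega) (by omega) (by omega)
              have F : d x (a j') ≤ max (d x y) (d y (a j')) + 2*ε := by
                by_contra hcon
                push_neg at hcon
                exact cNBx j' (by omega)
                  (Canon.trans (Canon.rule2 hcon (cBy j' le_rfl (by omega)))
                    (cBy j' le_rfl (by omega)))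
              refine ⟨j', by omega, by omega, ?_⟩
              rw [dsym y x] at T1
              rcases max_cases (d x y) (d y (a j')) with ⟨hm, _⟩ | ⟨hm, _⟩ <;> rw [hm] at F
              · linarith
              · linarith
        · rcases P2a.2.2 with ⟨hb, C⟩ | ⟨hb, C⟩
          · by_cases hc : i < k₁a
            · refine ⟨i+1, by omega, by omega, ?_⟩
              have e1 : insertSeq2 a y x i' k₁a (i+1+1) = a (i+1) := iM2 (by omega) (by omega)
              have T := ex0 C iM4 e1 (iM5 hb) (iM5 hb) (by omega) (by omega) le_rfl (by omega)
              rw [dsym (a (i+1)) x, dsym y x] at T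
              linarith
            · refine ⟨i+1, by omega, by omega, ?_⟩
              have e1 : insertSeq2 a y x i' k₁a (i+1+2) = a (i+1) := iM3 hb (by omega)
              have T1 := ex0 C iM4 (iM5 hb) e1 e1 (by omega) (by omega) le_rfl (by omega)
              have e3 : insertSeq2 a y x i' k₁a (i+1) = a i := iM2 (by omega) (by omega)
              have T2 := ex0 C iM4 iM4 e3 (iM5 hb) le_rfl (by omega) (by omega) (by omega)
              have F := flatY (i+1) i (by omega) (by omega) (by omega) (by omega)
              rw [dsym y x] at T2
              linarith
          · exfalso; omega
      obtain ⟨m, hm1, hm2, hm3⟩ := E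
      have F := flatX β m hb3 hb4 hm1 hm2
      linarith
    have CY : ∀ β, k' = j'-1 → i' < β → β < j' → d (a β) y ≤ d x y + 12 * ε := by
      intro β hkj hb3 hb4
      have E : ∃ m, i' < m ∧ m < j' ∧ d y (a m) ≤ d x y + 8 * ε := by
        rcases lt_trichotomy j j' with hjj | hjj | hjj
        · rcases OR2 with ⟨hb, C⟩ | ⟨hb, C⟩
          · exfalso; omega
          · refine ⟨j'-1, by omega, by omega, ?_⟩
            have e1 : insertSeq2 a x y k₁ k' ((j'-1)+1) = a (j'-1) := iM2 (by omega) (by omega)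
            have T := ex0 C iM4 e1 (iM5 hb) (iM5 hb) (by omega) (by omega) le_rfl (by omega)
            rw [dsym y (a (j'-1))]
            linarith
        · rcases lt_trichotomy i i' with hii | hii | hii
          · have hki : k = i := by
              rcases hk with h | h
              · exact h
              · exfalso; omega
            rcases OR1 with ⟨hb, C⟩ | ⟨hb, C⟩
            · by_cases hc : i' < k₀
              · refine ⟨k₀, by omega, by omega, ?_⟩
                have e1 : insertSeq2 a x y k k₀ (k₀+1) = a k₀ := iM2 (by omega) (le_refl _)
                have T := ex0 C iM4 e1 (iM5 hb) (iM5 hb) (by omega) (by omega) le_rfl (by omega)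
                rw [dsym y (a k₀)]
                linarith
              · refine ⟨i'+1, by omega, by omega, ?_⟩
                have e1 : insertSeq2 a x y k k₀ (i'+1) = a i' := iM2 (by omega) (by omega)
                have T := ex0 C iM4 e1 (iM5 hb) (iM5 hb) (by omega) (by omega) le_rfl (by omega)
                have e2 : insertSeq a y k' (k'+1) = y := iL3
                have T2 := ex0 Hyk' (iL1 (show i' ≤ k' by omega))
                  (iL1 (show i'+1 ≤ k' by omega)) e2 e2 (by omega) (by omega) le_rfl (by omega)
                rw [dsym y (a (i'+1))]
                linarith
            · exfalso; omega
          · refine ⟨i'+1, by omega, by omega, ?_⟩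
            have hM1 : ¬ (d x y > max (dxVal d a x i j) (dxVal d a y i' j') + 3 * ε ∨
                d x y < max (dxVal d a x i j) (dxVal d a y i' j') - 3 * ε) :=
              fun h => hmn ⟨hii, hjj, h⟩
            push_neg at hM1
            have h1 := dyhi (i'+1) (by omega) (by omega)
            have h2 : dxVal d a y i' j' ≤ max (dxVal d a x i j) (dxVal d a y i' j') :=
              le_max_right _ _
            linarith [hM1.2]
          · rcases P2a.2.2 with ⟨hb, C⟩ | ⟨hb, C⟩
            · by_cases hc : k₁a ≤ j'-1
              · refine ⟨k₁a, by omega, by omega, ?_⟩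
                have e1 : insertSeq2 a y x i' k₁a (k₁a+1) = a k₁a := iM2 (by omega) (le_refl _)
                have T := ex0 C iM4 iM4 e1 (iM5 hb) le_rfl (by omega) (by omega) (by omega)
                rw [dsym y x] at T
                linarith
              · refine ⟨j'-1, by omega, by omega, ?_⟩
                have e1 : insertSeq2 a y x i' k₁a ((j'-1)+1) = a (j'-1) := iM2 (by omega) (by omega)
                have T := ex0 C iM4 iM4 e1 (iM5 hb) le_rfl (by omega) (by omega) (by omega)
                rw [dsym y x] at T
                linarith
            · exfalso; omega
        · rcases P1b.2.2 with ⟨hb, C⟩ | ⟨hb, C⟩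
          · exfalso; omega
          · by_cases hc : k₀b < j'-1
            · refine ⟨j'-1, by omega, by omega, ?_⟩
              have e1 : insertSeq2 a y x k₀b (j-1) ((j'-1)+1) = a (j'-1) := iM2 hc (by omega)
              have T := ex0 C iM4 iM4 e1 (iM5 hb) le_rfl (by omega) (by omega) (by omega)
              rw [dsym y x] at T
              linarith
            · refine ⟨j'-1, by omega, by omega, ?_⟩
              have e1 : insertSeq2 a y x k₀b (j-1) (j'+1) = a j' := iM2 (by omega) (by omega)
              have T1 := ex0 C iM4 iM4 e1 (iM5 hb) le_rfl (by omega) (by omega) (by omega)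
              have e3 : insertSeq a y i' (i'+1) = y := iL3
              have T2 := ex0 HYi e3 e3 (iL2 (show i' < j'-1 by omega))
                (iL2 (show i' < j' by omega)) le_rfl (by omega) (by omega) (by omega)
              rw [dsym y x] at T1
              linarith
      obtain ⟨m, hm1, hm2, hm3⟩ := E
      have F := flatY β m hb3 hb4 hm1 hm2
      rw [dsym (a β) y]
      linarith
    have K3 : ∀ β, k < β → β ≤ k' → d x (a β) ≤ d x y + 12 * ε := by
      intro β hβ1 hβ2
      rcases OR2 with ⟨h21, C⟩ | ⟨h21, C⟩
      · have hki : k = i := by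
          rcases hk with h | h
          · exact h
          · exfalso; omega
        exact CX β hki (by omega) (by omega)
      · by_cases hβ : k₁ < β
        · have e1 : insertSeq2 a x y k₁ k' (β+1) = a β := iM2 hβ hβ2
          have := ex0 C iM4 iM4 e1 (iM5 h21) le_rfl (by omega) (by omega) (by omega)
          linarith
        · have hki : k = i := by
            rcases hk with h | h
            · exact h
            · exfalso; omega
          exact CX β hki (by omega) (by omega)
    have K4 : ∀ β, k < β → β ≤ k' → d (a β) y ≤ d x y + 12 * ε := by
      intro β hβ1 hβ2
      by_cases hβi : β ≤ i'
      · rcases OR1 with ⟨h01, C⟩ | ⟨h01, C⟩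
        · have e1 : insertSeq2 a x y k k₀ (β+1) = a β := iM2 hβ1 (by omega)
          have := ex0 C iM4 e1 (iM5 h01) (iM5 h01) (by omega) (by omega) le_rfl (by omega)
          linarith
        · exfalso; omega
      · have hkj : k' = j'-1 := by
          rcases hk' with h | h
          · exfalso; omega
          · exact h
        exact CY β hkj (by omega) (by omega)
    exact ⟨Hxk, Hyk', Or.inl ⟨hkk,
      assemble dself dnn heps hkk (by omega) Hxk Hyk' K1 K2 K3 K4 K5 K6⟩⟩

end Half
/-- Any location of `x` in a bounding hole of `H(x)` together with any location of `y` in a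
bounding hole of `H(y)` is `(x, y, 12)`-admissible, unless `H(x) = H(y)` and
`d x y ≫₃ max d_x d_y` or `d x y ≪₃ max d_x d_y`. -/
theorem pairwise_admissible_twelve (d : X → X → ℝ) (ε : ℝ) (p₀ q₀ : X) (a : ℕ → X) (n : ℕ)
    (hs : RobinsonSetup d ε p₀ q₀ a n)
    (hstand : StandingAssumption d ε p₀ q₀ a n)
    (x y : X) (hne : x ≠ y) (hx : OutsideChain a n x) (hy : OutsideChain a n y)
    (ix jx iy jy : ℕ)
    (hix : ix = iIdx d ε p₀ q₀ a n x) (hjx : jx = jIdx d ε p₀ q₀ a n x)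
    (hiy : iy = iIdx d ε p₀ q₀ a n y) (hjy : jy = jIdx d ε p₀ q₀ a n y)
    (hgapx : ix + 2 ≤ jx) (hgapy : iy + 2 ≤ jy)
    (hmain : ¬ (ix = iy ∧ jx = jy ∧
      (d x y > max (dxVal d a x ix jx) (dxVal d a y iy jy) + 3 * ε ∨
        d x y < max (dxVal d a x ix jx) (dxVal d a y iy jy) - 3 * ε))) :
    ∀ k k', (k = ix ∨ k = jx - 1) → (k' = iy ∨ k' = jy - 1) →
      PairHoleAdmissible d ε a n x y k k' 12 := by
  intro k k' hkx hky
  obtain ⟨dsym, dnn, dself⟩ := hs.dissim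
  have hSne : ({i | i < n ∧ Canon d ε p₀ q₀ (a i) x} : Set ℕ).Nonempty :=
    ⟨0, hs.npos, hs.lower x⟩
  have hSbdd : BddAbove {i | i < n ∧ Canon d ε p₀ q₀ (a i) x} :=
    ⟨n, fun m hm => le_of_lt hm.1⟩
  have hmemx : ix ∈ {i | i < n ∧ Canon d ε p₀ q₀ (a i) x} := by
    rw [hix]; exact Nat.sSup_mem hSne hSbdd
  have hTne : ({j | j < n ∧ Canon d ε p₀ q₀ x (a j)} : Set ℕ).Nonempty :=
    ⟨n - 1, by have := hs.npos; omega, hs.upper x⟩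
  have hmemjx : jx ∈ {j | j < n ∧ Canon d ε p₀ q₀ x (a j)} := by
    rw [hjx]; exact Nat.sInf_mem hTne
  have hSne' : ({i | i < n ∧ Canon d ε p₀ q₀ (a i) y} : Set ℕ).Nonempty :=
    ⟨0, hs.npos, hs.lower y⟩
  have hSbdd' : BddAbove {i | i < n ∧ Canon d ε p₀ q₀ (a i) y} :=
    ⟨n, fun m hm => le_of_lt hm.1⟩
  have hmemy : iy ∈ {i | i < n ∧ Canon d ε p₀ q₀ (a i) y} := by
    rw [hiy]; exact Nat.sSup_mem hSne' hSbdd'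
  have hTne' : ({j | j < n ∧ Canon d ε p₀ q₀ y (a j)} : Set ℕ).Nonempty :=
    ⟨n - 1, by have := hs.npos; omega, hs.upper y⟩
  have hmemjy : jy ∈ {j | j < n ∧ Canon d ε p₀ q₀ y (a j)} := by
    rw [hjy]; exact Nat.sInf_mem hTne'
  have hixn : ix < n := hmemx.1
  have hjxn : jx < n := hmemjx.1
  have hiyn : iy < n := hmemy.1
  have hjyn : jy < n := hmemjy.1
  have chainC : ∀ m m', m < m' → m' < n → Canon d ε p₀ q₀ (a m) (a m') :=
    fun m m' h1 h2 => (hs.chain m m' h1 h2).1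
  have cAx : ∀ m, m ≤ ix → Canon d ε p₀ q₀ (a m) x := by
    intro m hm
    rcases eq_or_lt_of_le hm with h | h
    · subst h; exact hmemx.2
    · exact Canon.trans (chainC m ix h hixn) hmemx.2
  have cBx : ∀ m, jx ≤ m → m < n → Canon d ε p₀ q₀ x (a m) := by
    intro m hm hmn2
    rcases eq_or_lt_of_le hm with h | h
    · subst h; exact hmemjx.2
    · exact Canon.trans hmemjx.2 (chainC jx m h hmn2)
  have cNAx : ∀ m, ix < m → m < n → ¬ Canon d ε p₀ q₀ (a m) x := by
    intro m h1 h2 hC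
    have : m ≤ ix := by rw [hix]; exact le_csSup hSbdd ⟨h2, hC⟩
    omega
  have cNBx : ∀ m, m < jx → ¬ Canon d ε p₀ q₀ x (a m) := by
    intro m h1 hC
    have : jx ≤ m := by rw [hjx]; exact Nat.sInf_le ⟨by omega, hC⟩
    omega
  have cAy : ∀ m, m ≤ iy → Canon d ε p₀ q₀ (a m) y := by
    intro m hm
    rcases eq_or_lt_of_le hm with h | h
    · subst h; exact hmemy.2
    · exact Canon.trans (chainC m iy h hiyn) hmemy.2
  have cBy : ∀ m, jy ≤ m → m < n → Canon d ε p₀ q₀ y (a m) := by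
    intro m hm hmn2
    rcases eq_or_lt_of_le hm with h | h
    · subst h; exact hmemjy.2
    · exact Canon.trans hmemjy.2 (chainC jy m h hmn2)
  have cNAy : ∀ m, iy < m → m < n → ¬ Canon d ε p₀ q₀ (a m) y := by
    intro m h1 h2 hC
    have : m ≤ iy := by rw [hiy]; exact le_csSup hSbdd' ⟨h2, hC⟩
    omega
  have cNBy : ∀ m, m < jy → ¬ Canon d ε p₀ q₀ y (a m) := by
    intro m h1 hC
    have : jy ≤ m := by rw [hjy]; exact Nat.sInf_le ⟨by omega, hC⟩
    omega
  have OX : ∀ kk, (kk = ix ∨ kk = jx - 1) → ∃ k'', iy ≤ k'' ∧ k'' ≤ jy - 1 ∧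
      PairHoleAdmissible d ε a n x y kk k'' 1 := by
    intro kk hkk
    have hcond : kk = iIdx d ε p₀ q₀ a n x ∨ kk = jIdx d ε p₀ q₀ a n x - 1 := by
      rcases hkk with h | h
      · exact Or.inl (h.trans hix)
      · right; rw [h, hjx]
    obtain ⟨k'', h1, h2, h3⟩ := hstand x y hne hx hy kk hcond
    exact ⟨k'', by rw [hiy]; exact h1, by rw [hjy]; exact h2, h3⟩
  have OY : ∀ kk, (kk = iy ∨ kk = jy - 1) → ∃ k'', ix ≤ k'' ∧ k'' ≤ jx - 1 ∧
      PairHoleAdmissible d ε a n y x kk k'' 1 := by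
    intro kk hkk
    have hcond : kk = iIdx d ε p₀ q₀ a n y ∨ kk = jIdx d ε p₀ q₀ a n y - 1 := by
      rcases hkk with h | h
      · exact Or.inl (h.trans hiy)
      · right; rw [h, hjy]
    obtain ⟨k'', h1, h2, h3⟩ := hstand y x (Ne.symm hne) hy hx kk hcond
    exact ⟨k'', by rw [hix]; exact h1, by rw [hjx]; exact h2, h3⟩
  rcases le_total k k' with h | h
  · exact half d ε p₀ q₀ a n x y ix jx iy jy dsym dself dnn hs.eps_nonneg
      hgapx hjxn hgapy hjyn cAx cBx cNAx cNBx cAy cBy cNAy cNBy chainC OX OY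
      hmain k k' hkx hky h
  · have hmn' : ¬ (iy = ix ∧ jy = jx ∧
        (d y x > max (dxVal d a y iy jy) (dxVal d a x ix jx) + 3 * ε ∨
          d y x < max (dxVal d a y iy jy) (dxVal d a x ix jx) - 3 * ε)) := by
      rintro ⟨h1, h2, h3⟩
      apply hmain
      refine ⟨h1.symm, h2.symm, ?_⟩
      rw [dsym y x, max_comm (dxVal d a y iy jy) (dxVal d a x ix jx)] at h3
      exact h3
    have H := half d ε p₀ q₀ a n y x iy jy ix jx dsym dself dnn hs.eps_nonneg
      hgapy hjyn hgapx hjxn cAy cBy cNAy cNBy cAx cBx cNAx cNBx chainC OY OX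
      hmn' k' k hky hkx h
    obtain ⟨Hy, Hx, hor⟩ := H
    exact ⟨Hx, Hy, hor.symm⟩
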